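/- arXiv:1603.03921 — 4 statements merged into one kernel-verified Lean document; each statement's English description precedes it below -/
import Mathlib

section
/- Let A₀, B₀ be real numbers with 0 < B₀ < A₀ and A₀² − 2B₀² > 0, let n ∈ ℕ, let A₁,…,A_n and B₁,…,B_n be real numbers, and suppose the acceptable-ISI condition 3·Σ_{i=1}^{n}(A_i² + B_i²) < A₀² − 2B₀² holds. Then the quantity a = B₀²/(4A₀²) + (Σ_{i=1}^{n}(A_i² + B_i²)/4)·(1/A₀² − (A₀² + B₀²)/(A₀² − B₀²)²) is strictly positive; in fact a > (B₀²/(4A₀²))·(A₀²B₀² + B₀⁴)/(3(A₀² − B₀²)²) > 0. -/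
open Finset

/-- Under the acceptable-ILI condition `A₀² − 2B₀² > 0` and the
acceptable-ISI condition `3·∑_{i=1}^{n}(A_i² + B_i²) < A₀² − 2B₀²`, the coefficient
`a = B₀²/(4A₀²) + (∑(A_i²+B_i²)/4)·(1/A₀² − (A₀²+B₀²)/(A₀²−B₀²)²)` satisfies
`a > (B₀²/(4A₀²))·(A₀²B₀² + B₀⁴)/(3(A₀² − B₀²)²) > 0`. -/
theorem coefficient_a_positive
    (A₀ B₀ : ℝ) (hB : 0 < B₀) (hAB : B₀ < A₀) (hILI : 0 < A₀ ^ 2 - 2 * B₀ ^ 2)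
    (n : ℕ) (A B : ℕ → ℝ)
    (hISI : 3 * ∑ i ∈ Finset.Icc 1 n, ((A i) ^ 2 + (B i) ^ 2) < A₀ ^ 2 - 2 * B₀ ^ 2) :
    B₀ ^ 2 / (4 * A₀ ^ 2) +
        (∑ i ∈ Finset.Icc 1 n, ((A i) ^ 2 + (B i) ^ 2)) / 4 *
          (1 / A₀ ^ 2 - (A₀ ^ 2 + B₀ ^ 2) / (A₀ ^ 2 - B₀ ^ 2) ^ 2) >
      B₀ ^ 2 / (4 * A₀ ^ 2) * ((A₀ ^ 2 * B₀ ^ 2 + B₀ ^ 4) / (3 * (A₀ ^ 2 - B₀ ^ 2) ^ 2)) ∧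
    B₀ ^ 2 / (4 * A₀ ^ 2) * ((A₀ ^ 2 * B₀ ^ 2 + B₀ ^ 4) / (3 * (A₀ ^ 2 - B₀ ^ 2) ^ 2)) > 0 := by
  have hA : 0 < A₀ := lt_trans hB hAB
  have hx : 0 < A₀ ^ 2 := by positivity
  have hxy : 0 < A₀ ^ 2 - B₀ ^ 2 := by nlinarith
  set S := ∑ i ∈ Finset.Icc 1 n, ((A i) ^ 2 + (B i) ^ 2) with hSdef
  constructor
  · rw [gt_iff_lt, ← sub_pos]
    have h1 : B₀ ^ 2 / (4 * A₀ ^ 2) + S / 4 * (1 / A₀ ^ 2 - (A₀ ^ 2 + B₀ ^ 2) / (A₀ ^ 2 - B₀ ^ 2) ^ 2)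
        - B₀ ^ 2 / (4 * A₀ ^ 2) * ((A₀ ^ 2 * B₀ ^ 2 + B₀ ^ 4) / (3 * (A₀ ^ 2 - B₀ ^ 2) ^ 2))
        = ((A₀ ^ 2 - 2 * B₀ ^ 2) - 3 * S) / 12 * (B₀ ^ 2 * (3 * A₀ ^ 2 - B₀ ^ 2) / (A₀ ^ 2 * (A₀ ^ 2 - B₀ ^ 2) ^ 2)) := by
      field_simp
      ring
    rw [h1]
    have h2 : 0 < (A₀ ^ 2 - 2 * B₀ ^ 2) - 3 * S := by linarith
    have hy : 0 < B₀ ^ 2 := by positivity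
    have h3 : 0 < B₀ ^ 2 * (3 * A₀ ^ 2 - B₀ ^ 2) / (A₀ ^ 2 * (A₀ ^ 2 - B₀ ^ 2) ^ 2) := by
      apply div_pos
      · apply mul_pos hy; nlinarith
      · positivity
    positivity
  · apply mul_pos
    · positivity
    · apply div_pos
      · nlinarith [mul_pos (mul_pos hB hB) hx, pow_pos hB 4]
      · positivity
end

section
/- Fix real numbers A₀, B₀ with 0 < B₀ < A₀ < 1 and A₀² − 2B₀² > 0, a natural number n, real numbers A₁,…,A_n, B₁,…,B_n ∈ [0,1] with 3·Σ_{k=1}^{n}(A_k² + B_k²) < A₀² − 2B₀², and σ_n² > 0. With a priori probabilities π₀ = π₁ = 1/2, define for Q > 0: σ_I²(Q) = (1/4)Q²·Σ_{k=1}^{n}(A_k² + B_k²) + (1/2)Q·Σ_{k=1}^{n}(A_k(1−A_k) + B_k(1−B_k)) + σ_n²; σ_ex0²(Q) = (1/2)·B₀(1−B₀)/(A₀²Q) + (1/4)·B₀²/A₀² + σ_I²(Q)/(Q²A₀²); σ_in0²(Q) = (A₀/(A₀²−B₀²))²·(1/2)·B₀(1−B₀)/Q + (B₀/(A₀²−B₀²))²·(1/2)·A₀(1−A₀)/Q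 + ((A₀²+B₀²)/(Q²(A₀²−B₀²)²))·σ_I²(Q); and h(Q) = Q²·(σ_ex0²(Q) − σ_in0²(Q)). Then h extends to a quadratic polynomial a·Q² + b·Q + c in Q with a > 0 and c < 0, and h has exactly one positive root: there exists a unique Q > 0 with h(Q) = 0. -/
set_option maxHeartbeats 1000000


open Finset

/-- Mean interference power `σ_I²(Q)` with a priori probabilities `π₀ = π₁ = 1/2`. -/
noncomputable def sigmaI2 (n : ℕ) (A B : ℕ → ℝ) (σn2 Q : ℝ) : ℝ :=
  (1 / 4) * Q ^ 2 * (∑ k ∈ Finset.Icc 1 n, ((A k) ^ 2 + (B k) ^ 2)) +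
    (1 / 2) * Q * (∑ k ∈ Finset.Icc 1 n, (A k * (1 - A k) + B k * (1 - B k))) + σn2

/-- Variance `σ_ex0²(Q)` of the practical ZF detector output (channel matrix excluding
ILI) under transmitted bit-0. -/
noncomputable def sigmaEx0sq (A₀ B₀ : ℝ) (n : ℕ) (A B : ℕ → ℝ) (σn2 Q : ℝ) : ℝ :=
  (1 / 2) * (B₀ * (1 - B₀)) / (A₀ ^ 2 * Q) + (1 / 4) * B₀ ^ 2 / A₀ ^ 2 +
    sigmaI2 n A B σn2 Q / (Q ^ 2 * A₀ ^ 2)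

/-- Variance `σ_in0²(Q)` of the practical ZF detector output (channel matrix including
ILI) under transmitted bit-0. -/
noncomputable def sigmaIn0sq (A₀ B₀ : ℝ) (n : ℕ) (A B : ℕ → ℝ) (σn2 Q : ℝ) : ℝ :=
  (A₀ / (A₀ ^ 2 - B₀ ^ 2)) ^ 2 * ((1 / 2) * (B₀ * (1 - B₀)) / Q) +
    (B₀ / (A₀ ^ 2 - B₀ ^ 2)) ^ 2 * ((1 / 2) * (A₀ * (1 - A₀)) / Q) +
    ((A₀ ^ 2 + B₀ ^ 2) / (Q ^ 2 * (A₀ ^ 2 - B₀ ^ 2) ^ 2)) * sigmaI2 n A B σn2 Q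

/-- The difference function `h(Q) = Q²·(σ_ex0²(Q) − σ_in0²(Q))`. -/
noncomputable def hDiff (A₀ B₀ : ℝ) (n : ℕ) (A B : ℕ → ℝ) (σn2 Q : ℝ) : ℝ :=
  Q ^ 2 * (sigmaEx0sq A₀ B₀ n A B σn2 Q - sigmaIn0sq A₀ B₀ n A B σn2 Q)

/-- **Theorem 2 of the paper.** Under acceptable interference
(`A₀² − 2B₀² > 0` and `3·∑(A_k² + B_k²) < A₀² − 2B₀²`) and `π₀ = π₁ = 1/2`, the function
`h(Q) = Q²(σ_ex0²(Q) − σ_in0²(Q))` extends to a quadratic `aQ² + bQ + c` with `a > 0`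
and `c < 0`, and has exactly one positive root. -/
theorem hDiff_quadratic_single_positive_root
    (A₀ B₀ : ℝ) (hB : 0 < B₀) (hBA : B₀ < A₀) (hA1 : A₀ < 1)
    (hILI : 0 < A₀ ^ 2 - 2 * B₀ ^ 2)
    (n : ℕ) (A B : ℕ → ℝ)
    (hA : ∀ k ∈ Finset.Icc 1 n, A k ∈ Set.Icc (0 : ℝ) 1)
    (hBk : ∀ k ∈ Finset.Icc 1 n, B k ∈ Set.Icc (0 : ℝ) 1)
    (hISI : 3 * ∑ k ∈ Finset.Icc 1 n, ((A k) ^ 2 + (B k) ^ 2) < A₀ ^ 2 - 2 * B₀ ^ 2)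
    (σn2 : ℝ) (hσ : 0 < σn2) :
    (∃ a b c : ℝ, 0 < a ∧ c < 0 ∧
      ∀ Q : ℝ, 0 < Q → hDiff A₀ B₀ n A B σn2 Q = a * Q ^ 2 + b * Q + c) ∧
    (∃! Q : ℝ, 0 < Q ∧ hDiff A₀ B₀ n A B σn2 Q = 0) := by
  have hA0 : 0 < A₀ := hB.trans hBA
  have hx : (0:ℝ) < A₀ ^ 2 := by positivity
  have hD : 0 < A₀ ^ 2 - B₀ ^ 2 := by nlinarith
  have hD2 : (0:ℝ) < (A₀ ^ 2 - B₀ ^ 2) ^ 2 := by positivity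
  set S := ∑ k ∈ Finset.Icc 1 n, ((A k) ^ 2 + (B k) ^ 2) with hSdef
  set T := ∑ k ∈ Finset.Icc 1 n, (A k * (1 - A k) + B k * (1 - B k)) with hTdef
  have hSnn : 0 ≤ S := Finset.sum_nonneg fun k _ => by positivity
  set κ : ℝ := 1 / A₀ ^ 2 - (A₀ ^ 2 + B₀ ^ 2) / (A₀ ^ 2 - B₀ ^ 2) ^ 2 with hκdef
  have hκmul : κ * (A₀ ^ 2 * (A₀ ^ 2 - B₀ ^ 2) ^ 2)
      = B₀ ^ 2 * (B₀ ^ 2 - 3 * A₀ ^ 2) := by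
    rw [hκdef]; field_simp; ring
  have hBA2 : B₀ ^ 2 < A₀ ^ 2 := by nlinarith
  have hκneg : κ < 0 := by
    have hrhs : B₀ ^ 2 * (B₀ ^ 2 - 3 * A₀ ^ 2) < 0 :=
      mul_neg_of_pos_of_neg (by positivity) (by nlinarith)
    nlinarith [mul_pos hx hD2]
  set a : ℝ := B₀ ^ 2 / (4 * A₀ ^ 2) + κ * S / 4 with hadef
  set b : ℝ := (1 / 2) * B₀ * (1 - B₀) * (1 / A₀ ^ 2 - A₀ ^ 2 / (A₀ ^ 2 - B₀ ^ 2) ^ 2)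
      - (1 / 2) * A₀ * (1 - A₀) * B₀ ^ 2 / (A₀ ^ 2 - B₀ ^ 2) ^ 2 + κ * T / 2 with hbdef
  set c : ℝ := κ * σn2 with hcdef
  have hc : c < 0 := mul_neg_of_neg_of_pos hκneg hσ
  have hamul : a * (4 * (A₀ ^ 2 * (A₀ ^ 2 - B₀ ^ 2) ^ 2))
      = B₀ ^ 2 * ((A₀ ^ 2 - B₀ ^ 2) ^ 2 - S * (3 * A₀ ^ 2 - B₀ ^ 2)) := by
    rw [hadef, hκdef]; field_simp; ring
  have ha : 0 < a := by
    have h1 : 0 < B₀ ^ 2 * ((A₀ ^ 2 - B₀ ^ 2) ^ 2 - S * (3 * A₀ ^ 2 - B₀ ^ 2)) := by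
      have h3 : 0 < 3 * A₀ ^ 2 - B₀ ^ 2 := by nlinarith
      have hkey : 0 < (3 * A₀ ^ 2 - B₀ ^ 2) * ((A₀ ^ 2 - 2 * B₀ ^ 2) - 3 * S) :=
        mul_pos h3 (by linarith)
      have hR : 0 < (A₀ ^ 2 - B₀ ^ 2) ^ 2 - S * (3 * A₀ ^ 2 - B₀ ^ 2) := by
        nlinarith [mul_pos hx (mul_pos hB hB), mul_pos hB hB]
      exact mul_pos (by positivity) hR
    nlinarith [mul_pos hx hD2]
  have hrep : ∀ Q : ℝ, 0 < Q →
      hDiff A₀ B₀ n A B σn2 Q = a * Q ^ 2 + b * Q + c := by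
    intro Q hQ
    have hQ0 : Q ≠ 0 := ne_of_gt hQ
    have hxne : A₀ ^ 2 ≠ 0 := ne_of_gt hx
    have hDne : A₀ ^ 2 - B₀ ^ 2 ≠ 0 := ne_of_gt hD
    unfold hDiff sigmaEx0sq sigmaIn0sq sigmaI2
    rw [hadef, hbdef, hcdef, hκdef, ← hSdef, ← hTdef]
    field_simp
    ring
  refine ⟨⟨a, b, c, ha, hc, hrep⟩, ?_⟩
  -- exactly one positive root
  have hdisc : 0 < b ^ 2 - 4 * a * c := by nlinarith [sq_nonneg b, mul_pos ha (neg_pos.mpr hc)]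
  set s : ℝ := Real.sqrt (b ^ 2 - 4 * a * c) with hsdef
  have hs2 : s ^ 2 = b ^ 2 - 4 * a * c := Real.sq_sqrt hdisc.le
  have hbs : b < s := by
    have h1 : Real.sqrt (b ^ 2) < s := Real.sqrt_lt_sqrt (sq_nonneg b) (by nlinarith)
    rw [Real.sqrt_sq_eq_abs] at h1
    exact (le_abs_self b).trans_lt h1
  set Q₀ : ℝ := (s - b) / (2 * a) with hQ₀def
  have hQ₀pos : 0 < Q₀ := div_pos (by linarith) (by linarith)
  have hroot : a * Q₀ ^ 2 + b * Q₀ + c = 0 := by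
    have hane : a ≠ 0 := ne_of_gt ha
    rw [hQ₀def]
    field_simp
    linear_combination hs2
  refine ⟨Q₀, ⟨hQ₀pos, by rw [hrep Q₀ hQ₀pos]; exact hroot⟩, ?_⟩
  rintro Q' ⟨hQ'pos, hroot'⟩
  rw [hrep Q' hQ'pos] at hroot'
  have key : (Q' - Q₀) * (a * Q' * Q₀ - c) = 0 := by
    linear_combination Q₀ * hroot' - Q' * hroot
  have hpos : 0 < a * Q' * Q₀ - c := by nlinarith [mul_pos (mul_pos ha hQ'pos) hQ₀pos]
  have := mul_eq_zero.mp key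
  rcases this with h | h
  · linarith
  · linarith
end

section
/- Let α > 0, β > 0 and μ ∈ ℝ. Then the generalized Gaussian density f(x) = (β/(2αΓ(1/β)))·exp(−(|x − μ|/α)^β) integrates to 1 over ℝ: ∫_{−∞}^{∞} f(x) dx = 1. -/
open Real MeasureTheory

/-- The generalized Gaussian density
`f(x) = (β/(2αΓ(1/β)))·exp(−(|x−μ|/α)^β)` with `α, β > 0` integrates to `1` over `ℝ`. -/
theorem generalizedGaussian_integral_eq_one
    (α β μ : ℝ) (hα : 0 < α) (hβ : 0 < β) :
    ∫ x : ℝ, (β / (2 * α * Real.Gamma (1 / β))) * Real.exp (-(|x - μ| / α) ^ β) = 1 := by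
  have h1 : ∫ x : ℝ, Real.exp (-(|x - μ| / α) ^ β) = 2 * α * Real.Gamma (1 / β) / β := by
    have h2 : ∫ x : ℝ, Real.exp (-(|x - μ| / α) ^ β)
        = ∫ x : ℝ, Real.exp (-(|x| / α) ^ β) := by
      exact integral_sub_right_eq_self (fun x => Real.exp (-(|x| / α) ^ β)) μ
    have h3 : ∫ x : ℝ, Real.exp (-(|x| / α) ^ β)
        = ∫ x : ℝ, Real.exp (-(|x / α|) ^ β) := by
      congr 1; ext x
      rw [abs_div, abs_of_pos hα]
    have h4 : (∫ x : ℝ, Real.exp (-(|x / α|) ^ β))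
        = |α| • ∫ x : ℝ, Real.exp (-(|x|) ^ β) :=
      MeasureTheory.Measure.integral_comp_div (fun x => Real.exp (-(|x|) ^ β)) α
    have h5 : (∫ x : ℝ, Real.exp (-(|x|) ^ β))
        = 2 * ∫ x in Set.Ioi (0 : ℝ), Real.exp (-x ^ β) :=
      integral_comp_abs (f := fun x => Real.exp (-x ^ β))
    have h6 : (∫ x in Set.Ioi (0 : ℝ), Real.exp (-x ^ β)) = Real.Gamma (1 / β + 1) :=
      integral_exp_neg_rpow hβ
    have h7 : Real.Gamma (1 / β + 1) = (1 / β) * Real.Gamma (1 / β) :=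
      Real.Gamma_add_one (by positivity)
    rw [h2, h3, h4, h5, h6, h7, abs_of_pos hα, smul_eq_mul]
    field_simp
  rw [integral_const_mul, h1]
  have hG : Real.Gamma (1 / β) ≠ 0 := (Real.Gamma_pos_of_pos (by positivity)).ne'
  field_simp
end

section
/- Let α > 0, β > 0 and μ ∈ ℝ, and let f(x) = (β/(2αΓ(1/β)))·exp(−(|x − μ|/α)^β) be the generalized Gaussian density. Then its second central moment equals α²·Γ(3/β)/Γ(1/β): ∫_{−∞}^{∞} (x − μ)²·f(x) dx = α²·Γ(3/β)/Γ(1/β). -/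
open Real MeasureTheory

/-- The second central moment of the generalized Gaussian density
`f(x) = (β/(2αΓ(1/β)))·exp(−(|x−μ|/α)^β)` equals `α²·Γ(3/β)/Γ(1/β)`. -/
theorem generalizedGaussian_second_central_moment
    (α β μ : ℝ) (hα : 0 < α) (hβ : 0 < β) :
    ∫ x : ℝ, (x - μ) ^ 2 *
        ((β / (2 * α * Real.Gamma (1 / β))) * Real.exp (-(|x - μ| / α) ^ β)) =
      α ^ 2 * Real.Gamma (3 / β) / Real.Gamma (1 / β) := by
  set C := β / (2 * α * Real.Gamma (1 / β)) with hC
  have h1 : (∫ x : ℝ, (x - μ) ^ 2 * (C * Real.exp (-(|x - μ| / α) ^ β)))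
      = ∫ x : ℝ, |x| ^ 2 * (C * Real.exp (-(|x| / α) ^ β)) := by
    rw [← integral_sub_right_eq_self
      (fun y : ℝ => |y| ^ 2 * (C * Real.exp (-(|y| / α) ^ β))) μ]
    exact integral_congr_ae (Filter.Eventually.of_forall fun x => by simp [sq_abs])
  rw [h1, integral_comp_abs (f := fun t => t ^ 2 * (C * Real.exp (-(t / α) ^ β)))]
  have h2 : (∫ t in Set.Ioi (0:ℝ), t ^ 2 * (C * Real.exp (-(t / α) ^ β)))
      = C * ∫ t in Set.Ioi (0:ℝ), t ^ (2:ℝ) * Real.exp (-(α ^ β)⁻¹ * t ^ β) := by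
    rw [← integral_const_mul]
    refine setIntegral_congr_fun measurableSet_Ioi (fun t ht => ?_)
    have ht' : (0:ℝ) ≤ t := le_of_lt ht
    rw [Real.div_rpow ht' hα.le, Real.rpow_two]
    ring_nf
  rw [h2, integral_rpow_mul_exp_neg_mul_rpow hβ (by norm_num) (inv_pos.mpr (rpow_pos_of_pos hα β))]
  have h3 : ((α ^ β)⁻¹) ^ (-(2 + 1) / β) = α ^ (3:ℝ) := by
    rw [← Real.rpow_neg hα.le, ← Real.rpow_mul hα.le,
      show -β * (-(2 + 1) / β) = 3 by field_simp; ring]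
  rw [h3]
  have hΓ : Real.Gamma (1 / β) ≠ 0 := (Real.Gamma_pos_of_pos (by positivity)).ne'
  have hα3 : α ^ (3:ℝ) = α ^ 3 := by
    rw [show (3:ℝ) = ((3:ℕ):ℝ) by norm_num, Real.rpow_natCast]
  rw [hC, hα3]
  field_simp
  ring
end
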